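/- For every R > 0, the matrix z_NA(R) is the unique global maximizer of z ↦ g_NA(z, R) over all 2×2 real matrices. -/
import Mathlib


/-- The Principal's reduced objective `g_NA(z, R)` in the no-Planner (Nash) model. -/
noncomputable def gNA (k11 k12 k21 k22 : ℝ) (z : Fin 2 → Fin 2 → ℝ) (R : ℝ) : ℝ :=
  -(R / 2) * (z 0 0 + z 0 1 - 1) ^ 2 - (R / 2) * (z 1 0 + z 1 1 - 1) ^ 2
    + z 0 0 / k11 + z 0 1 / k12 + z 1 0 / k21 + z 1 1 / k22
    - (z 0 0) ^ 2 / (2 * k11) - (z 0 1) ^ 2 / (2 * k12)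
    - (z 1 0) ^ 2 / (2 * k21) - (z 1 1) ^ 2 / (2 * k22)

/-- The optimal sensitivities `z_NA(R)` in the no-Planner (Nash) model. -/
noncomputable def zNA (k11 k12 k21 k22 R : ℝ) : Fin 2 → Fin 2 → ℝ :=
  ![![(1 + R * k12) / (1 + R * (k11 + k12)), (1 + R * k11) / (1 + R * (k11 + k12))],
    ![(1 + R * k22) / (1 + R * (k21 + k22)), (1 + R * k21) / (1 + R * (k21 + k22))]]

lemma block_aux (a b R x y : ℝ) (ha : a ≠ 0) (hb : b ≠ 0) (hD : 1 + R*(a+b) ≠ 0) :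
    (-(R/2)*((1+R*b)/(1+R*(a+b)) + (1+R*a)/(1+R*(a+b)) - 1)^2
      + ((1+R*b)/(1+R*(a+b)))/a + ((1+R*a)/(1+R*(a+b)))/b
      - ((1+R*b)/(1+R*(a+b)))^2/(2*a) - ((1+R*a)/(1+R*(a+b)))^2/(2*b))
    - (-(R/2)*(x+y-1)^2 + x/a + y/b - x^2/(2*a) - y^2/(2*b))
    = (R/2)*((x - (1+R*b)/(1+R*(a+b))) + (y - (1+R*a)/(1+R*(a+b))))^2
      + (x - (1+R*b)/(1+R*(a+b)))^2/(2*a) + (y - (1+R*a)/(1+R*(a+b)))^2/(2*b) := by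
  field_simp
  ring

lemma gNA_diff (k11 k12 k21 k22 : ℝ)
    (hk11 : 0 < k11) (hk12 : 0 < k12) (hk21 : 0 < k21) (hk22 : 0 < k22)
    (R : ℝ) (hR : 0 < R) (z : Fin 2 → Fin 2 → ℝ) :
    gNA k11 k12 k21 k22 (zNA k11 k12 k21 k22 R) R - gNA k11 k12 k21 k22 z R
    = ((R/2)*((z 0 0 - zNA k11 k12 k21 k22 R 0 0) + (z 0 1 - zNA k11 k12 k21 k22 R 0 1))^2
        + (z 0 0 - zNA k11 k12 k21 k22 R 0 0)^2/(2*k11)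
        + (z 0 1 - zNA k11 k12 k21 k22 R 0 1)^2/(2*k12))
      + ((R/2)*((z 1 0 - zNA k11 k12 k21 k22 R 1 0) + (z 1 1 - zNA k11 k12 k21 k22 R 1 1))^2
        + (z 1 0 - zNA k11 k12 k21 k22 R 1 0)^2/(2*k21)
        + (z 1 1 - zNA k11 k12 k21 k22 R 1 1)^2/(2*k22)) := by
  have hD1 : (1:ℝ) + R*(k11+k12) ≠ 0 := by positivity
  have hD2 : (1:ℝ) + R*(k21+k22) ≠ 0 := by positivity
  have h1 := block_aux k11 k12 R (z 0 0) (z 0 1) hk11.ne' hk12.ne' hD1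
  have h2 := block_aux k21 k22 R (z 1 0) (z 1 1) hk21.ne' hk22.ne' hD2
  simp only [gNA, zNA, Matrix.cons_val_zero, Matrix.cons_val_one, Matrix.head_cons,
    Matrix.head_fin_const]
  linarith [h1, h2]


/-- for every `R > 0`, `z_NA(R)` is the unique global maximizer of
`z ↦ g_NA(z, R)`: it maximizes `g_NA(·, R)` and any global maximizer equals it. -/
theorem zNA_unique_maximizer (k11 k12 k21 k22 : ℝ)
    (hk11 : 0 < k11) (hk12 : 0 < k12) (hk21 : 0 < k21) (hk22 : 0 < k22)
    (R : ℝ) (hR : 0 < R) :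
    (∀ z : Fin 2 → Fin 2 → ℝ,
        gNA k11 k12 k21 k22 z R ≤ gNA k11 k12 k21 k22 (zNA k11 k12 k21 k22 R) R) ∧
      (∀ z : Fin 2 → Fin 2 → ℝ,
        (∀ w : Fin 2 → Fin 2 → ℝ, gNA k11 k12 k21 k22 w R ≤ gNA k11 k12 k21 k22 z R) →
          z = zNA k11 k12 k21 k22 R) := by
  have key : ∀ z : Fin 2 → Fin 2 → ℝ,
      gNA k11 k12 k21 k22 z R ≤ gNA k11 k12 k21 k22 (zNA k11 k12 k21 k22 R) R ∧
      (gNA k11 k12 k21 k22 (zNA k11 k12 k21 k22 R) R ≤ gNA k11 k12 k21 k22 z R →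
        z = zNA k11 k12 k21 k22 R) := by
    intro z
    have h := gNA_diff k11 k12 k21 k22 hk11 hk12 hk21 hk22 R hR z
    set d00 := z 0 0 - zNA k11 k12 k21 k22 R 0 0 with hd00
    set d01 := z 0 1 - zNA k11 k12 k21 k22 R 0 1 with hd01
    set d10 := z 1 0 - zNA k11 k12 k21 k22 R 1 0 with hd10
    set d11 := z 1 1 - zNA k11 k12 k21 k22 R 1 1 with hd11
    have hA : (0:ℝ) ≤ (R/2)*(d00 + d01)^2 := by positivity
    have hB : (0:ℝ) ≤ d00^2/(2*k11) := by positivity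
    have hC : (0:ℝ) ≤ d01^2/(2*k12) := by positivity
    have hA' : (0:ℝ) ≤ (R/2)*(d10 + d11)^2 := by positivity
    have hB' : (0:ℝ) ≤ d10^2/(2*k21) := by positivity
    have hC' : (0:ℝ) ≤ d11^2/(2*k22) := by positivity
    constructor
    · linarith
    · intro hle
      have hB0 : d00^2/(2*k11) = 0 := le_antisymm (by linarith) hB
      have hC0 : d01^2/(2*k12) = 0 := le_antisymm (by linarith) hC
      have hB0' : d10^2/(2*k21) = 0 := le_antisymm (by linarith) hB'
      have hC0' : d11^2/(2*k22) = 0 := le_antisymm (by linarith) hC'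
      have e00 : d00 = 0 := by
        have := (div_eq_zero_iff.mp hB0).resolve_right (by positivity)
        exact pow_eq_zero_iff (by norm_num) |>.mp this
      have e01 : d01 = 0 := by
        have := (div_eq_zero_iff.mp hC0).resolve_right (by positivity)
        exact pow_eq_zero_iff (by norm_num) |>.mp this
      have e10 : d10 = 0 := by
        have := (div_eq_zero_iff.mp hB0').resolve_right (by positivity)
        exact pow_eq_zero_iff (by norm_num) |>.mp this
      have e11 : d11 = 0 := by
        have := (div_eq_zero_iff.mp hC0').resolve_right (by positivity)
        exact pow_eq_zero_iff (by norm_num) |>.mp this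
      funext i j
      fin_cases i <;> fin_cases j
      · have := hd00 ▸ e00; simpa using sub_eq_zero.mp this
      · have := hd01 ▸ e01; simpa using sub_eq_zero.mp this
      · have := hd10 ▸ e10; simpa using sub_eq_zero.mp this
      · have := hd11 ▸ e11; simpa using sub_eq_zero.mp this
  exact ⟨fun z => (key z).1, fun z hz => (key z).2 (hz _)⟩
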